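/- For $\sigma \in S_{2n}$ defined by $\sigma(2k-1) = 2\pi_1(k)-1$ and $\sigma(2k) = 2\pi_2(k)$ for $k=1,\dots,n$, where $\pi_1, \pi_2 \in S_n$, the coset-type of $\sigma$ equals the cycle-type of $\pi_1\pi_2^{-1}$. -/

import Mathlib

open scoped Classical

noncomputable section

/-- The vertex `2k-1` (0-indexed: `2k`). -/
def lo (n : ℕ) (k : Fin n) : Fin (2*n) := ⟨2*k.1, by have := k.2; omega⟩
/-- The vertex `2k` (0-indexed: `2k+1`). -/
def hi (n : ℕ) (k : Fin n) : Fin (2*n) := ⟨2*k.1+1, by have := k.2; omega⟩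

/-- The hyperoctahedral group `H_n ⊆ S_{2n}`, generated by the transpositions
`(2k-1, 2k)` and the double transpositions `(2i-1, 2j-1)(2i, 2j)` for `i < j`. -/
def hyperoctahedral (n : ℕ) : Subgroup (Equiv.Perm (Fin (2*n))) :=
  Subgroup.closure
    ({g | ∃ k : Fin n, g = Equiv.swap (lo n k) (hi n k)} ∪
     {g | ∃ i j : Fin n, i < j ∧
        g = Equiv.swap (lo n i) (lo n j) * Equiv.swap (hi n i) (hi n j)})

/-- The graph `Γ(σ)` on vertices `1, …, 2n` with edges `{2k-1, 2k}` and
`{σ(2k-1), σ(2k)}` for `k = 1, …, n`. -/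
def pairGraph (n : ℕ) (σ : Equiv.Perm (Fin (2*n))) : SimpleGraph (Fin (2*n)) :=
  SimpleGraph.fromRel (fun x y => ∃ k : Fin n,
    (x = lo n k ∧ y = hi n k) ∨ (x = σ (lo n k) ∧ y = σ (hi n k)))

/-- `ℓ′(σ)`, the number of connected components of `Γ(σ)`. -/
def compCount (n : ℕ) (σ : Equiv.Perm (Fin (2*n))) : ℕ :=
  Nat.card (pairGraph n σ).ConnectedComponent

/-- The coset-type of `σ ∈ S_{2n}`: the multiset of half the sizes of the
connected components of `Γ(σ)`; it is a partition of `n`. -/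
def cosetType (n : ℕ) (σ : Equiv.Perm (Fin (2*n))) : Multiset ℕ :=
  haveI : Fintype (pairGraph n σ).ConnectedComponent := Fintype.ofFinite _
  (Finset.univ : Finset (pairGraph n σ).ConnectedComponent).val.map
    (fun c => c.supp.ncard / 2)

open Equiv Equiv.Perm SimpleGraph

variable {n : ℕ}

def half (n : ℕ) (x : Fin (2*n)) : Fin n := ⟨x.1/2, by have := x.2; omega⟩

@[simp] lemma half_lo (k : Fin n) : half n (lo n k) = k := by
  apply Fin.ext; simp only [half, lo]; omega

@[simp] lemma half_hi (k : Fin n) : half n (hi n k) = k := by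
  apply Fin.ext; simp only [half, hi]; omega

lemma lo_or_hi (x : Fin (2*n)) : x = lo n (half n x) ∨ x = hi n (half n x) := by
  rcases Nat.even_or_odd x.1 with h | h
  · left; apply Fin.ext; obtain ⟨m, hm⟩ := h; simp only [lo, half]; omega
  · right; apply Fin.ext; obtain ⟨m, hm⟩ := h; simp only [hi, half]; omega

lemma lo_ne_hi (k k' : Fin n) : lo n k ≠ hi n k' := by
  intro h
  have := congrArg Fin.val h
  simp only [lo, hi] at this
  omega

section Graph

variable (σ : Perm (Fin (2*n))) (π₁ π₂ : Perm (Fin n))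
  (h1 : ∀ k : Fin n, σ (lo n k) = lo n (π₁ k))
  (h2 : ∀ k : Fin n, σ (hi n k) = hi n (π₂ k))

include h1 h2 in
lemma adj_sc {x y : Fin (2*n)} (h : (pairGraph n σ).Adj x y) :
    (π₂ * π₁⁻¹).SameCycle (half n x) (half n y) := by
  rw [pairGraph, SimpleGraph.fromRel_adj] at h
  have aux : ∀ x y : Fin (2*n), (∃ k : Fin n,
      (x = lo n k ∧ y = hi n k) ∨ (x = σ (lo n k) ∧ y = σ (hi n k))) →
      (π₂ * π₁⁻¹).SameCycle (half n x) (half n y) := by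
    rintro x y ⟨k, ⟨rfl, rfl⟩ | ⟨rfl, rfl⟩⟩
    · rw [half_lo, half_hi]
    · rw [h1, h2, half_lo, half_hi]
      exact ⟨1, by simp [Equiv.Perm.mul_apply]⟩
  rcases h.2 with h' | h'
  · exact aux x y h'
  · exact (aux y x h').symm

include h1 h2 in
lemma reach_sc {x y : Fin (2*n)} (h : (pairGraph n σ).Reachable x y) :
    (π₂ * π₁⁻¹).SameCycle (half n x) (half n y) := by
  obtain ⟨w⟩ := h
  induction w with
  | nil => exact SameCycle.refl _ _
  | cons ha _ ih => exact (adj_sc σ π₁ π₂ h1 h2 ha).trans ih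

lemma adj_pair (k : Fin n) : (pairGraph n σ).Adj (lo n k) (hi n k) := by
  rw [pairGraph, SimpleGraph.fromRel_adj]
  exact ⟨lo_ne_hi k k, Or.inl ⟨k, Or.inl ⟨rfl, rfl⟩⟩⟩

include h1 h2 in
lemma adj_pair' (k : Fin n) : (pairGraph n σ).Adj (lo n (π₁ k)) (hi n (π₂ k)) := by
  rw [pairGraph, SimpleGraph.fromRel_adj]
  exact ⟨lo_ne_hi _ _, Or.inl ⟨k, Or.inr ⟨(h1 k).symm, (h2 k).symm⟩⟩⟩

include h1 h2 in
lemma reach_step (j : Fin n) :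
    (pairGraph n σ).Reachable (lo n j) (lo n ((π₂ * π₁⁻¹) j)) := by
  have a2 := adj_pair' σ π₁ π₂ h1 h2 (π₁⁻¹ j)
  rw [show π₁ (π₁⁻¹ j) = j from π₁.apply_symm_apply j] at a2
  have a1 := adj_pair σ ((π₂ * π₁⁻¹) j)
  have : (π₂ * π₁⁻¹) j = π₂ (π₁⁻¹ j) := rfl
  rw [this]
  exact a2.reachable.trans (a1.reachable.symm)

include h1 h2 in
lemma reach_pow (i : ℕ) (j : Fin n) :
    (pairGraph n σ).Reachable (lo n j) (lo n (((π₂ * π₁⁻¹) ^ i) j)) := by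
  induction i with
  | zero => simpa using Reachable.refl _
  | succ i ih =>
      have hs := reach_step σ π₁ π₂ h1 h2 (((π₂ * π₁⁻¹) ^ i) j)
      have : ((π₂ * π₁⁻¹) ^ (i+1)) j = (π₂ * π₁⁻¹) (((π₂ * π₁⁻¹) ^ i) j) := by
        rw [pow_succ']; rfl
      rw [this]
      exact ih.trans hs

include h1 h2 in
lemma sc_reach {j k : Fin n} (h : (π₂ * π₁⁻¹).SameCycle j k) :
    (pairGraph n σ).Reachable (lo n j) (lo n k) := by
  obtain ⟨i, -, hik⟩ := h.exists_pow_eq'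
  rw [← hik]
  exact reach_pow σ π₁ π₂ h1 h2 i j

lemma reach_lo (x : Fin (2*n)) : (pairGraph n σ).Reachable x (lo n (half n x)) := by
  rcases lo_or_hi x with h' | h'
  · nth_rewrite 1 [h']
    exact Reachable.refl _
  · nth_rewrite 1 [h']
    exact (adj_pair σ (half n x)).reachable.symm

include h1 h2 in
lemma reach_iff (x y : Fin (2*n)) :
    (pairGraph n σ).Reachable x y ↔ (π₂ * π₁⁻¹).SameCycle (half n x) (half n y) := by
  constructor
  · exact reach_sc σ π₁ π₂ h1 h2
  · intro h
    exact (reach_lo σ x).trans ((sc_reach σ π₁ π₂ h1 h2 h).trans (reach_lo σ y).symm)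

end Graph

def scSetoid (τ : Perm (Fin n)) : Setoid (Fin n) :=
  ⟨τ.SameCycle, ⟨fun _ => SameCycle.refl _ _, SameCycle.symm, SameCycle.trans⟩⟩

def sz (τ : Perm (Fin n)) : Quotient (scSetoid τ) → ℕ :=
  Quotient.lift (fun k => (Finset.univ.filter fun j => τ.SameCycle j k).card)
    (fun k k' (h : τ.SameCycle k k') => by
      have he : (Finset.univ.filter fun j => τ.SameCycle j k) =
          Finset.univ.filter fun j => τ.SameCycle j k' := by
        ext j
        simp only [Finset.mem_filter, Finset.mem_univ, true_and]
        exact ⟨fun hj => hj.trans h, fun hj => hj.trans h.symm⟩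
      exact congrArg Finset.card he)

lemma sameCycle_fixed {τ : Perm (Fin n)} {k j : Fin n} (hk : τ k = k)
    (h : τ.SameCycle k j) : j = k := by
  obtain ⟨i, hik⟩ := h
  rw [← hik, zpow_apply_eq_self_of_apply_eq_self hk]

def movedQ (τ : Perm (Fin n)) : Quotient (scSetoid τ) → Prop :=
  Quotient.lift (fun k => k ∈ τ.support)
    (fun k k' (h : τ.SameCycle k k') => by
      by_cases hk : k ∈ τ.support
      · by_cases hk' : k' ∈ τ.support
        · simp [hk, hk']
        · exact absurd ((sameCycle_fixed (notMem_support.mp hk') h.symm) ▸ hk') (by simp [hk])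
      · have := sameCycle_fixed (notMem_support.mp hk) h
        simp [hk, this ▸ hk])

lemma class_of_fixed (τ : Perm (Fin n)) {k : Fin n} (hk : τ k = k) :
    (Finset.univ.filter fun j => τ.SameCycle j k) = {k} := by
  ext j
  simp only [Finset.mem_filter, Finset.mem_univ, true_and, Finset.mem_singleton]
  exact ⟨fun h => sameCycle_fixed hk h.symm, fun h => h ▸ SameCycle.refl _ _⟩

lemma class_sizes (τ : Perm (Fin n)) :
    (Finset.univ : Finset (Quotient (scSetoid τ))).val.map (sz τ) =
      τ.cycleType + Multiset.replicate (n - τ.support.card) 1 := by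
  classical
  have hsplit : (Finset.univ : Finset (Quotient (scSetoid τ))).val =
      (Finset.univ.filter (movedQ τ)).val +
      (Finset.univ.filter (fun q => ¬ movedQ τ q)).val := by
    rw [Finset.filter_val, Finset.filter_val, Multiset.filter_add_not]
  rw [hsplit, Multiset.map_add]
  congr 1
  · -- the moved classes give the cycle type
    rw [Equiv.Perm.cycleType_def]
    refine Multiset.map_eq_map_of_bij_of_nodup _ _
      (Finset.univ.filter (movedQ τ)).nodup τ.cycleFactorsFinset.nodup
      (fun q _ => Quotient.lift (fun k => τ.cycleOf k)
        (fun k k' (h : τ.SameCycle k k') => h.cycleOf_eq) q) ?_ ?_ ?_ ?_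
    · intro q hq
      obtain ⟨k, rfl⟩ := Quotient.exists_rep q
      rw [Finset.mem_val, Finset.mem_filter] at hq
      have hk : k ∈ τ.support := hq.2
      exact cycleOf_mem_cycleFactorsFinset_iff.mpr hk
    · intro q hq q' hq' heq
      obtain ⟨k, rfl⟩ := Quotient.exists_rep q
      obtain ⟨k', rfl⟩ := Quotient.exists_rep q'
      rw [Finset.mem_val, Finset.mem_filter] at hq hq'
      change τ.cycleOf k = τ.cycleOf k' at heq
      have hk' : k' ∈ (τ.cycleOf k').support :=
        mem_support_cycleOf_iff.mpr ⟨SameCycle.refl _ _, hq'.2⟩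
      rw [← heq] at hk'
      exact Quotient.sound (mem_support_cycleOf_iff.mp hk').1
    · intro c hc
      rw [Finset.mem_val] at hc
      obtain ⟨x, hx⟩ := (mem_cycleFactorsFinset_iff.mp hc).1.nonempty_support
      have hxτ : x ∈ τ.support := by
        rw [Equiv.Perm.mem_support] at hx ⊢
        rw [← (mem_cycleFactorsFinset_iff.mp hc).2 x (Equiv.Perm.mem_support.mpr hx)]
        exact hx
      refine ⟨Quotient.mk (scSetoid τ) x, ?_, ?_⟩
      · rw [Finset.mem_val, Finset.mem_filter]
        exact ⟨Finset.mem_univ _, hxτ⟩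
      · show τ.cycleOf x = c
        exact (cycle_is_cycleOf hx hc).symm
    · intro q hq
      obtain ⟨k, rfl⟩ := Quotient.exists_rep q
      rw [Finset.mem_val, Finset.mem_filter] at hq
      have hk : k ∈ τ.support := hq.2
      show (Finset.univ.filter fun j => τ.SameCycle j k).card = (τ.cycleOf k).support.card
      congr 1
      ext j
      simp only [Finset.mem_filter, Finset.mem_univ, true_and, mem_support_cycleOf_iff]
      exact ⟨fun h => ⟨h.symm, hk⟩, fun h => h.1.symm⟩
  · -- the fixed classes give the 1s
    rw [Multiset.eq_replicate]
    constructor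
    · rw [Multiset.card_map]
      show (Finset.univ.filter fun q => ¬ movedQ τ q).card = n - τ.support.card
      have hcc : n - τ.support.card = τ.supportᶜ.card := by
        rw [Finset.card_compl, Fintype.card_fin]
      rw [hcc]
      refine (Finset.card_bij (fun k _ => Quotient.mk (scSetoid τ) k) ?_ ?_ ?_).symm
      · intro k hk
        rw [Finset.mem_compl] at hk
        rw [Finset.mem_filter]
        exact ⟨Finset.mem_univ _, by simpa [movedQ] using hk⟩
      · intro k hk k' hk' heq
        rw [Finset.mem_compl, notMem_support] at hk
        exact (sameCycle_fixed hk (Quotient.exact heq)).symm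
      · intro q hq
        rw [Finset.mem_filter] at hq
        obtain ⟨k, hkq⟩ := Quotient.exists_rep q
        have : k ∉ τ.support := by
          subst hkq; simpa [movedQ] using hq.2
        exact ⟨k, Finset.mem_compl.mpr this, hkq⟩
    · intro m hm
      obtain ⟨q, hq, rfl⟩ := Multiset.mem_map.mp hm
      obtain ⟨k, rfl⟩ := Quotient.exists_rep q
      rw [Finset.mem_val, Finset.mem_filter] at hq
      have hk : τ k = k := notMem_support.mp (by simpa [movedQ] using hq.2)
      show sz τ (Quotient.mk _ k) = 1
      simp only [sz, Quotient.lift_mk]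
      change (Finset.univ.filter fun j => τ.SameCycle j k).card = 1
      rw [class_of_fixed τ hk]
      exact Finset.card_singleton k

lemma card_preimage_half (S : Finset (Fin n)) :
    (Finset.univ.filter fun x : Fin (2*n) => half n x ∈ S).card = 2 * S.card := by
  classical
  rw [Finset.card_eq_sum_card_fiberwise (f := half n) (s := Finset.univ.filter fun x : Fin (2*n) => half n x ∈ S) (t := S)
      (fun x hx => (Finset.mem_filter.mp hx).2)]
  have hfib : ∀ j ∈ S, ((Finset.univ.filter fun x : Fin (2*n) => half n x ∈ S).filter
      fun x => half n x = j) = {lo n j, hi n j} := by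
    intro j hj
    ext x
    simp only [Finset.mem_filter, Finset.mem_univ, true_and, Finset.mem_insert,
      Finset.mem_singleton]
    constructor
    · rintro ⟨-, h⟩
      rcases lo_or_hi x with h' | h'
      · left; rw [h', h]
      · right; rw [h', h]
    · rintro (rfl | rfl) <;> simp [hj]
  rw [Finset.sum_congr rfl fun j hj => by rw [hfib j hj]]
  have h2c : ∀ j : Fin n, ({lo n j, hi n j} : Finset (Fin (2*n))).card = 2 := by
    intro j
    rw [Finset.card_insert_of_notMem (by simp [lo_ne_hi])]
    simp
  rw [Finset.sum_congr rfl fun j _ => h2c j, Finset.sum_const, smul_eq_mul, mul_comm]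

/-- If `σ(2k-1) = 2π₁(k)-1` and `σ(2k) = 2π₂(k)` for all `k`, then the coset-type of
`σ` equals the cycle-type of `π₁ π₂⁻¹` (as a partition of `n`). -/
theorem stmt10 (n : ℕ) (σ : Equiv.Perm (Fin (2*n))) (π₁ π₂ : Equiv.Perm (Fin n))
    (h1 : ∀ k : Fin n, σ (lo n k) = lo n (π₁ k))
    (h2 : ∀ k : Fin n, σ (hi n k) = hi n (π₂ k)) :
    cosetType n σ = (Equiv.Perm.partition (π₁ * π₂⁻¹)).parts := by
  classical
  set τ := π₁ * π₂⁻¹ with hτ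
  have hρτ : ∀ j k : Fin n, (π₂ * π₁⁻¹).SameCycle j k ↔ τ.SameCycle j k := by
    intro j k
    have h : π₂ * π₁⁻¹ = τ⁻¹ := by rw [hτ]; simp [mul_inv_rev]
    rw [h]
    exact sameCycle_inv
  letI instC : Fintype (pairGraph n σ).ConnectedComponent := Fintype.ofFinite _
  set g : (pairGraph n σ).ConnectedComponent → Quotient (scSetoid τ) :=
    SimpleGraph.ConnectedComponent.lift (fun x => Quotient.mk (scSetoid τ) (half n x))
      (fun v w p _ => Quotient.sound
        ((hρτ _ _).mp (reach_sc σ π₁ π₂ h1 h2 p.reachable))) with hgdef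
  have hg_bij : Function.Bijective g := by
    constructor
    · intro c d
      refine SimpleGraph.ConnectedComponent.ind₂ (fun x y h => ?_) c d
      exact SimpleGraph.ConnectedComponent.sound
        ((reach_iff σ π₁ π₂ h1 h2 x y).mpr ((hρτ _ _).mpr (Quotient.exact h)))
    · intro q
      obtain ⟨k, rfl⟩ := Quotient.exists_rep q
      refine ⟨(pairGraph n σ).connectedComponentMk (lo n k), ?_⟩
      show Quotient.mk (scSetoid τ) (half n (lo n k)) = _
      rw [half_lo]
  have hsupp : ∀ c : (pairGraph n σ).ConnectedComponent, c.supp.ncard / 2 = sz τ (g c) := by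
    refine SimpleGraph.ConnectedComponent.ind (fun x => ?_)
    have hset : ((pairGraph n σ).connectedComponentMk x).supp =
        ↑(Finset.univ.filter fun y : Fin (2*n) =>
            half n y ∈ (Finset.univ.filter fun j => τ.SameCycle j (half n x))) := by
      ext y
      simp only [SimpleGraph.ConnectedComponent.mem_supp_iff, Finset.coe_filter,
        Set.mem_setOf_eq, Finset.mem_filter, Finset.mem_univ, true_and,
        SimpleGraph.ConnectedComponent.eq]
      rw [reach_iff σ π₁ π₂ h1 h2, hρτ]
    rw [hset, Set.ncard_coe_finset, card_preimage_half]
    show _ = sz τ (Quotient.mk (scSetoid τ) (half n x))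
    simp only [sz, Quotient.lift_mk]
    change _ = (Finset.univ.filter fun j => τ.SameCycle j (half n x)).card
    omega
  have hmain : (Finset.univ : Finset (pairGraph n σ).ConnectedComponent).val.map
      (fun c => c.supp.ncard / 2) = (Equiv.Perm.partition τ).parts := by
    rw [Multiset.map_congr rfl (fun c _ => hsupp c)]
    have hmap : (Finset.univ : Finset (pairGraph n σ).ConnectedComponent).val.map g =
        (Finset.univ : Finset (Quotient (scSetoid τ))).val := by
      have hh := congrArg Finset.val (Finset.map_univ_equiv (Equiv.ofBijective g hg_bij))
      rw [Finset.map_val] at hh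
      exact hh
    calc (Finset.univ : Finset (pairGraph n σ).ConnectedComponent).val.map (fun c => sz τ (g c))
        = ((Finset.univ : Finset (pairGraph n σ).ConnectedComponent).val.map g).map (sz τ) := by
          rw [Multiset.map_map]; rfl
      _ = (Finset.univ : Finset (Quotient (scSetoid τ))).val.map (sz τ) := by rw [hmap]
      _ = (Equiv.Perm.partition τ).parts := by
          rw [class_sizes τ, Equiv.Perm.parts_partition, Fintype.card_fin]
  rw [← hmain, cosetType]
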